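/- Let H ∈ (0,1) and define b(x) = ∫₀^∞ F_H(v)·(1 − e^{−2Hv})·sin(xv) dv. Then for every x > 0: b(x) > 8xH² / ( (H² + x²)·(9H² + x²) ); in particular b(x) > 0 for all x > 0. -/

import Mathlib

open Real MeasureTheory

/-- `F_H(v) = 2 cosh(Hv) - |2 sinh(v/2)|^{2H}`. -/
noncomputable def Ffun (H v : ℝ) : ℝ :=
  2 * Real.cosh (H * v) - |2 * Real.sinh (v / 2)| ^ (2 * H)

open Set Filter Topology


lemma integrable_exp_sin {a : ℝ} (ha : 0 < a) (x : ℝ) :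
    IntegrableOn (fun v => Real.exp (-(a*v)) * Real.sin (x*v)) (Ioi (0:ℝ)) := by
  refine MeasureTheory.Integrable.mono (exp_neg_integrableOn_Ioi 0 ha) ?_ ?_
  · exact (Continuous.mul (by fun_prop) (by fun_prop)).aestronglyMeasurable
  · filter_upwards with v
    rw [Real.norm_eq_abs, Real.norm_eq_abs, abs_mul, abs_exp, abs_exp, neg_mul]
    nlinarith [abs_sin_le_one (x*v), Real.exp_pos (-(a*v)), abs_nonneg (Real.sin (x*v)),
      mul_le_of_le_one_right (le_of_lt (Real.exp_pos (-(a*v)))) (abs_sin_le_one (x*v))]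

lemma integral_exp_sin {a : ℝ} (ha : 0 < a) (x : ℝ) :
    ∫ v in Ioi (0:ℝ), Real.exp (-(a*v)) * Real.sin (x*v) = x / (a^2 + x^2) := by
  have hden : (0:ℝ) < a^2 + x^2 := by positivity
  set F : ℝ → ℝ := fun v =>
    -Real.exp (-(a*v)) * (a * Real.sin (x*v) + x * Real.cos (x*v)) / (a^2+x^2) with hF
  have hderiv : ∀ v ∈ Ioi (0:ℝ), HasDerivAt F (Real.exp (-(a*v)) * Real.sin (x*v)) v := by
    intro v _
    have h1 : HasDerivAt (fun v : ℝ => Real.exp (-(a*v))) (-a * Real.exp (-(a*v))) v := by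
      have := (Real.hasDerivAt_exp (-(a*v))).comp v (by
        simpa using ((hasDerivAt_id v).const_mul (-a)) : HasDerivAt (fun v : ℝ => -(a*v)) (-a) v)
      exact this.congr_deriv (by ring)
    have h2 : HasDerivAt (fun v : ℝ => Real.sin (x*v)) (x * Real.cos (x*v)) v := by
      have := (Real.hasDerivAt_sin (x*v)).comp v (by
        simpa using ((hasDerivAt_id v).const_mul x) : HasDerivAt (fun v : ℝ => x*v) x v)
      exact this.congr_deriv (by ring)
    have h3 : HasDerivAt (fun v : ℝ => Real.cos (x*v)) (-(x * Real.sin (x*v))) v := by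
      have := (Real.hasDerivAt_cos (x*v)).comp v (by
        simpa using ((hasDerivAt_id v).const_mul x) : HasDerivAt (fun v : ℝ => x*v) x v)
      exact this.congr_deriv (by ring)
    have h4 : HasDerivAt (fun v : ℝ => a * Real.sin (x*v) + x * Real.cos (x*v))
        (a * (x * Real.cos (x*v)) + x * (-(x * Real.sin (x*v)))) v :=
      ((h2.const_mul a).add (h3.const_mul x))
    have h5 := ((h1.neg).mul h4).div_const (a^2+x^2)
    refine h5.congr_deriv (Eq.symm ?_)
    simp only [Pi.neg_apply]
    field_simp
    ring
  have hcont : ContinuousWithinAt F (Ici (0:ℝ)) 0 := by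
    apply Continuous.continuousWithinAt
    fun_prop
  have htend : Tendsto F atTop (nhds 0) := by
    have hb : ∀ v : ℝ, ‖F v‖ ≤ Real.exp (-(a*v)) * ((a + |x|) / (a^2+x^2)) := by
      intro v
      have hkey : |a * Real.sin (x*v) + x * Real.cos (x*v)| ≤ a + |x| := by
        calc |a * Real.sin (x*v) + x * Real.cos (x*v)|
            ≤ |a * Real.sin (x*v)| + |x * Real.cos (x*v)| := abs_add_le _ _
          _ ≤ a + |x| := by
              rw [abs_mul, abs_mul]
              gcongr
              · rw [abs_of_pos ha]
                nlinarith [abs_sin_le_one (x*v), abs_nonneg (Real.sin (x*v)), ha]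
              · nlinarith [abs_cos_le_one (x*v), abs_nonneg (Real.cos (x*v)), abs_nonneg x]
      rw [hF]
      simp only [Real.norm_eq_abs, abs_div, abs_mul, abs_neg, abs_exp]
      rw [abs_of_pos hden, mul_div_assoc]
      gcongr
    have h0 : Tendsto (fun v : ℝ => a*v) atTop atTop :=
      Filter.Tendsto.const_mul_atTop ha tendsto_id
    have h1 : Tendsto (fun v : ℝ => Real.exp (-(a*v))) atTop (nhds 0) :=
      Real.tendsto_exp_atBot.comp (tendsto_neg_atBot_iff.mpr h0)
    exact squeeze_zero_norm hb (by simpa using h1.mul_const ((a+|x|)/(a^2+x^2)))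
  have := integral_Ioi_of_hasDerivAt_of_tendsto hcont hderiv (integrable_exp_sin ha x) htend
  rw [this, hF]
  simp
  field_simp


noncomputable def ee (A : ℝ) : ℕ → ℝ
  | 0 => 1
  | k+1 => ee A k * ((k : ℝ) - A) / ((k : ℝ) + 1)

lemma ee_zero (A : ℝ) : ee A 0 = 1 := rfl

lemma ee_succ (A : ℝ) (k : ℕ) : ee A (k+1) = ee A k * ((k : ℝ) - A) / ((k : ℝ) + 1) := rfl

lemma abs_ee_succ_le {A : ℝ} (hA : 0 < A) (hA2 : A < 2) :
    ∀ k : ℕ, |ee A (k+1)| ≤ A / ((k:ℝ)+1) := by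
  intro k
  induction k with
  | zero =>
    rw [ee_succ, ee_zero]
    norm_num
    rw [abs_of_pos hA]
  | succ n ih =>
    have h1 : |((n:ℝ)+1) - A| ≤ (n:ℝ)+1 := by
      rw [abs_le]
      constructor <;> nlinarith [Nat.cast_nonneg (α := ℝ) n]
    have h2 : ee A (n+2) = ee A (n+1) * (((n:ℝ)+1) - A) / ((n:ℝ)+2) := by
      rw [ee_succ A (n+1)]
      push_cast
      ring
    rw [h2, abs_div, abs_mul, abs_of_pos (by positivity : (0:ℝ) < (n:ℝ)+2)]
    calc |ee A (n+1)| * |((n:ℝ)+1) - A| / ((n:ℝ)+2)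
        ≤ (A / ((n:ℝ)+1)) * ((n:ℝ)+1) / ((n:ℝ)+2) := by gcongr
      _ = A / ((n:ℝ)+2) := by
            rw [div_mul_cancel₀ _ (show ((n:ℝ)+1) ≠ 0 by positivity)]
      _ ≤ A / (↑(n+1)+1) := le_of_eq (by push_cast; ring_nf)

lemma abs_ee_le_two {A : ℝ} (hA : 0 < A) (hA2 : A < 2) (k : ℕ) : |ee A k| ≤ 2 := by
  cases k with
  | zero => norm_num [ee_zero]
  | succ n =>
    refine (abs_ee_succ_le hA hA2 n).trans ?_
    rw [div_le_iff₀ (by positivity)]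
    nlinarith [Nat.cast_nonneg (α := ℝ) n]

lemma summable_ee_mul_pow {A : ℝ} (hA : 0 < A) (hA2 : A < 2) {y : ℝ} (hy : |y| < 1) :
    Summable (fun k : ℕ => ee A k * y ^ k) := by
  refine Summable.of_norm_bounded
    ((summable_geometric_of_lt_one (abs_nonneg y) hy).mul_left 2) ?_
  intro k
  rw [Real.norm_eq_abs, abs_mul, abs_pow]
  exact mul_le_mul_of_nonneg_right (abs_ee_le_two hA hA2 k) (by positivity)

lemma hasSum_ee {A : ℝ} (hA : 0 < A) (hA2 : A < 2) {u : ℝ} (hu0 : 0 ≤ u) (hu1 : u < 1) :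
    HasSum (fun k : ℕ => ee A k * u ^ k) ((1 - u) ^ A) := by
  set r : ℝ := (1 + u) / 2 with hr
  have hur : u < r := by rw [hr]; linarith
  have hr1 : r < 1 := by rw [hr]; linarith
  have hr0 : 0 < r := by rw [hr]; linarith
  set t : Set ℝ := Ioo (-r) r with ht
  have h0t : (0:ℝ) ∈ t := by constructor <;> simp_all <;> linarith
  have habs : ∀ y ∈ t, |y| < 1 := fun y hy => lt_trans (abs_lt.mpr ⟨hy.1, hy.2⟩) hr1
  have hsumu : Summable (fun n : ℕ => 2 * ((n:ℝ)+1) * r ^ n) := by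
    have h1 : Summable (fun n : ℕ => (n:ℝ) ^ 1 * r ^ n) :=
      summable_pow_mul_geometric_of_norm_lt_one 1
        (by rw [Real.norm_eq_abs, abs_of_pos hr0]; exact hr1)
    have h2 : Summable (fun n : ℕ => r ^ n) := summable_geometric_of_lt_one hr0.le hr1
    exact ((h1.add h2).mul_left 2).congr (fun n => by push_cast; ring)
  have hsumU : Summable (fun n : ℕ => 2 * (n:ℝ) * r ^ (n-1)) := by
    refine (summable_nat_add_iff 1).mp ?_
    refine hsumu.congr (fun n => ?_)
    push_cast
    norm_num
  have hderiv : ∀ n : ℕ, ∀ y : ℝ, y ∈ t →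
      HasDerivAt (fun z : ℝ => ee A n * z ^ n) (ee A n * ((n:ℕ) * y ^ (n-1))) y := by
    intro n y _
    exact (hasDerivAt_pow n y).const_mul (ee A n)
  have hbound : ∀ n : ℕ, ∀ y : ℝ, y ∈ t →
      ‖ee A n * ((n:ℕ) * y ^ (n-1))‖ ≤ 2 * (n:ℝ) * r ^ (n-1) := by
    intro n y hy
    rw [Real.norm_eq_abs, abs_mul, abs_mul, Nat.abs_cast, abs_pow]
    have hyr : |y| ≤ r := (abs_lt.mpr ⟨hy.1, hy.2⟩).le
    calc |ee A n| * ((n:ℝ) * |y| ^ (n-1)) ≤ 2 * ((n:ℝ) * r ^ (n-1)) := by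
          apply mul_le_mul (abs_ee_le_two hA hA2 n) ?_ (by positivity) (by norm_num)
          exact mul_le_mul_of_nonneg_left (pow_le_pow_left₀ (abs_nonneg y) hyr _)
            (Nat.cast_nonneg n)
      _ = 2 * (n:ℝ) * r ^ (n-1) := by ring
  have hsum0 : Summable (fun n : ℕ => ee A n * (0:ℝ) ^ n) := by
    apply summable_of_ne_finset_zero (s := {0})
    intro n hn
    simp only [Finset.mem_singleton] at hn
    rw [zero_pow hn, mul_zero]
  have hFd : ∀ y ∈ t, HasDerivAt (fun z => ∑' n : ℕ, ee A n * z ^ n)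
      (∑' n : ℕ, ee A n * ((n:ℕ) * y ^ (n-1))) y := by
    intro y hy
    exact hasDerivAt_tsum_of_isPreconnected hsumU isOpen_Ioo ((convex_Ioo _ _).isPreconnected)
      hderiv hbound h0t hsum0 hy
  have hsumD : ∀ y ∈ t, Summable (fun n : ℕ => ee A n * ((n:ℕ) * y ^ (n-1))) := by
    intro y hy
    exact Summable.of_norm_bounded hsumU (fun n => hbound n y hy)
  have hODE : ∀ y ∈ t, (1 - y) * (∑' n : ℕ, ee A n * ((n:ℕ) * y ^ (n-1)))
      = -A * (∑' n : ℕ, ee A n * y ^ n) := by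
    intro y hy
    set D : ℝ := ∑' n : ℕ, ee A n * ((n:ℕ) * y ^ (n-1)) with hD
    set Fv : ℝ := ∑' n : ℕ, ee A n * y ^ n with hFv
    have hd : HasSum (fun n : ℕ => ee A n * ((n:ℕ) * y ^ (n-1))) D := (hsumD y hy).hasSum
    have hF : HasSum (fun n : ℕ => ee A n * y ^ n) Fv :=
      (summable_ee_mul_pow hA hA2 (habs y hy)).hasSum
    have h1 : HasSum (fun n : ℕ => y * (ee A n * ((n:ℕ) * y ^ (n-1)))) (y * D) := hd.mul_left y
    have h2 : HasSum (fun n : ℕ => ee A n * (n:ℕ) * y ^ n) (y * D) := by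
      refine h1.congr_fun ?_
      intro n
      cases n with
      | zero => simp
      | succ m => simp only [Nat.add_sub_cancel]; push_cast; ring
    have h3 : HasSum (fun n : ℕ => ee A n * (n:ℕ) * y ^ n - A * (ee A n * y ^ n))
        (y * D - A * Fv) := h2.sub (hF.mul_left A)
    have h4 : HasSum (fun n : ℕ => ee A (n+1) * (((n:ℕ):ℝ)+1) * y ^ n) (y * D - A * Fv) := by
      refine h3.congr_fun ?_
      intro n
      rw [ee_succ]
      field_simp
    have h5 : HasSum (fun n : ℕ => ee A (n+1) * (((n:ℕ):ℝ)+1) * y ^ n) D := by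
      have h50 : HasSum (fun n : ℕ => ee A (n+1) * (((n+1:ℕ):ℝ) * y ^ n)) (D - 0) :=
        (hasSum_nat_add_iff (f := fun m : ℕ => ee A m * ((m:ℕ) * y ^ (m-1))) 1).mpr
          (by simpa using hd)
      have h52 : HasSum (fun n : ℕ => ee A (n+1) * (((n+1:ℕ):ℝ) * y ^ n)) D := by
        simpa using h50
      exact h52.congr_fun (fun n => by push_cast; ring)
    have h6 : y * D - A * Fv = D := h4.unique h5
    linarith
  have hIcc : Icc (0:ℝ) u ⊆ t := by
    intro y hy
    exact ⟨by linarith [hy.1, hr0], by linarith [hy.2, hur]⟩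
  have hderivzero : ∀ y ∈ Icc (0:ℝ) u,
      HasDerivAt (fun z => (∑' n : ℕ, ee A n * z ^ n) * (1 - z) ^ (-A)) 0 y := by
    intro y hy
    have hyt : y ∈ t := hIcc hy
    have hy1 : 0 < 1 - y := by have := habs y hyt; rw [abs_lt] at this; linarith [this.2]
    have h6 : HasDerivAt (fun z : ℝ => (1 - z) ^ (-A)) (-A * (1-y) ^ (-A-1) * (-1)) y := by
      have hin : HasDerivAt (fun z : ℝ => 1 - z) (-1) y := by
        simpa using (hasDerivAt_id y).const_sub 1
      have hout := Real.hasDerivAt_rpow_const (x := 1 - y) (p := -A) (Or.inl (ne_of_gt hy1))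
      exact hout.comp y hin
    have h7 := (hFd y hyt).mul h6
    refine h7.congr_deriv (Eq.symm ?_)
    have hsplit : (1-y) ^ (-A) = (1-y) ^ (-A-1) * (1-y) := by
      rw [← Real.rpow_add_one (ne_of_gt hy1) (-A-1)]
      norm_num
    rw [hsplit]
    linear_combination (-((1-y) ^ (-A-1))) * hODE y hyt
  have hcont : ContinuousOn (fun z => (∑' n : ℕ, ee A n * z ^ n) * (1 - z) ^ (-A))
      (Icc (0:ℝ) u) :=
    fun y hy => ((hderivzero y hy).differentiableAt.continuousAt).continuousWithinAt
  have hconst := constant_of_has_deriv_right_zero hcont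
    (fun y hy => (hderivzero y (Ico_subset_Icc_self hy)).hasDerivWithinAt) u ⟨hu0, le_rfl⟩
  have hF0 : (∑' n : ℕ, ee A n * (0:ℝ) ^ n) = 1 := by
    rw [tsum_eq_single 0 (fun n hn => by rw [zero_pow hn, mul_zero])]
    norm_num [ee_zero]
  simp only [sub_zero, Real.one_rpow, mul_one] at hconst
  rw [hF0] at hconst
  have hu1' : 0 < 1 - u := by linarith
  have hFu : (∑' n : ℕ, ee A n * u ^ n) = (1 - u) ^ A := by
    have h8 : (∑' n : ℕ, ee A n * u ^ n) * (1-u) ^ (-A) * (1-u) ^ A = (1-u) ^ A := by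
      rw [hconst, one_mul]
    rwa [mul_assoc, ← Real.rpow_add hu1', neg_add_cancel, Real.rpow_zero, mul_one] at h8
  have := (summable_ee_mul_pow hA hA2 (by rw [abs_of_nonneg hu0]; exact hu1)).hasSum
  rwa [hFu] at this

-- ∫_{0}^{∞} e^{-a v} dv = 1/a
lemma integral_exp_neg_mul {a : ℝ} (ha : 0 < a) :
    ∫ v in Ioi (0:ℝ), Real.exp (-(a*v)) = 1 / a := by
  have hint : IntegrableOn (fun v => Real.exp (-(a*v))) (Ioi (0:ℝ)) := by
    refine (exp_neg_integrableOn_Ioi 0 ha).congr_fun (fun v _ => by ring_nf) measurableSet_Ioi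
  have hderiv : ∀ v ∈ Ioi (0:ℝ),
      HasDerivAt (fun v : ℝ => -Real.exp (-(a*v)) / a) (Real.exp (-(a*v))) v := by
    intro v _
    have h1 : HasDerivAt (fun v : ℝ => Real.exp (-(a*v))) (-a * Real.exp (-(a*v))) v := by
      have := (Real.hasDerivAt_exp (-(a*v))).comp v (by
        simpa using ((hasDerivAt_id v).const_mul (-a)) : HasDerivAt (fun v : ℝ => -(a*v)) (-a) v)
      exact this.congr_deriv (by ring)
    have := (h1.neg).div_const a
    refine this.congr_deriv (Eq.symm ?_)
    field_simp
  have htend : Tendsto (fun v : ℝ => -Real.exp (-(a*v)) / a) atTop (nhds 0) := by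
    have h0 : Tendsto (fun v : ℝ => a*v) atTop atTop :=
      Filter.Tendsto.const_mul_atTop ha tendsto_id
    have h1 : Tendsto (fun v : ℝ => Real.exp (-(a*v))) atTop (nhds 0) :=
      Real.tendsto_exp_atBot.comp (tendsto_neg_atBot_iff.mpr h0)
    simpa using (h1.neg).div_const a
  have hcont : ContinuousWithinAt (fun v : ℝ => -Real.exp (-(a*v)) / a) (Ici (0:ℝ)) 0 := by
    apply Continuous.continuousWithinAt
    fun_prop
  have := integral_Ioi_of_hasDerivAt_of_tendsto hcont hderiv hint htend
  rw [this]
  norm_num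
  rw [neg_div, neg_neg, one_div]

-- telescoping product
noncomputable def Vprod (A : ℝ) (k : ℕ) : ℝ := ∏ j ∈ Finset.range k, ((j:ℝ) + 2 - A)

lemma Vprod_nonneg {A : ℝ} (hA2 : A < 2) (k : ℕ) : 0 ≤ Vprod A k := by
  apply Finset.prod_nonneg
  intro j _
  have : (0:ℝ) ≤ (j:ℝ) := Nat.cast_nonneg j
  linarith

lemma ee_formula (A : ℝ) (k : ℕ) :
    ee A (k+2) = A * (A-1) * Vprod A k / (Nat.factorial (k+2) : ℝ) := by
  induction k with
  | zero =>
    rw [ee_succ A 1, ee_succ A 0, ee_zero]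
    simp [Vprod, Nat.factorial]
    ring
  | succ n ih =>
    rw [ee_succ A (n+2), ih]
    have hV : Vprod A (n+1) = Vprod A n * ((n:ℝ) + 2 - A) := by
      rw [Vprod, Finset.prod_range_succ]; rfl
    have hfac : (Nat.factorial (n+3) : ℝ) = ((n:ℝ)+3) * (Nat.factorial (n+2) : ℝ) := by
      rw [show n+3 = (n+2)+1 from rfl, Nat.factorial_succ]
      push_cast
      ring
    rw [hV, hfac]
    have h1 : (Nat.factorial (n+2) : ℝ) ≠ 0 := by positivity
    have h2 : ((n:ℝ)+3) ≠ 0 := by positivity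
    push_cast
    field_simp
    ring

lemma sum_ee_eq (A : ℝ) (n : ℕ) :
    ∑ k ∈ Finset.range n, ((k:ℝ)+2) * ee A (k+2)
      = A - A * Vprod A n / (Nat.factorial n : ℝ) := by
  induction n with
  | zero => simp [Vprod]
  | succ m ih =>
    rw [Finset.sum_range_succ, ih, ee_formula]
    have hV : Vprod A (m+1) = Vprod A m * ((m:ℝ) + 2 - A) := by
      rw [Vprod, Finset.prod_range_succ]; rfl
    have hfac2 : (Nat.factorial (m+2) : ℝ) = ((m:ℝ)+2) * ((m:ℝ)+1) * (Nat.factorial m : ℝ) := by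
      rw [Nat.factorial_succ, Nat.factorial_succ]
      push_cast
      ring
    have hfac1 : (Nat.factorial (m+1) : ℝ) = ((m:ℝ)+1) * (Nat.factorial m : ℝ) := by
      rw [Nat.factorial_succ]; push_cast; ring
    rw [hV, hfac2, hfac1]
    have h1 : (Nat.factorial m : ℝ) ≠ 0 := by positivity
    have h2 : ((m:ℝ)+1) ≠ 0 := by positivity
    have h3 : ((m:ℝ)+2) ≠ 0 := by positivity
    field_simp
    ring

lemma sum_ee_le {A : ℝ} (hA : 0 < A) (hA2 : A < 2) (n : ℕ) :
    ∑ k ∈ Finset.range n, ((k:ℝ)+2) * ee A (k+2) ≤ A := by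
  rw [sum_ee_eq]
  have h1 : 0 ≤ A * Vprod A n / (Nat.factorial n : ℝ) := by
    have := Vprod_nonneg hA2 n
    positivity
  linarith

lemma ee_two_nonneg {A : ℝ} (hA1 : 1 ≤ A) (hA2 : A < 2) (k : ℕ) : 0 ≤ ee A (k+2) := by
  rw [ee_formula]
  have h1 := Vprod_nonneg hA2 k
  have h2 : (0:ℝ) < (Nat.factorial (k+2) : ℝ) := by positivity
  have h3 : (0:ℝ) ≤ A * (A-1) := by nlinarith
  positivity

lemma ee_succ_nonpos {A : ℝ} (hA : 0 < A) (hA1 : A ≤ 1) (k : ℕ) : ee A (k+1) ≤ 0 := by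
  induction k with
  | zero =>
    rw [ee_succ, ee_zero]
    norm_num
    positivity
  | succ n ih =>
    rw [ee_succ A (n+1)]
    apply div_nonpos_of_nonpos_of_nonneg
    · apply mul_nonpos_of_nonpos_of_nonneg ih
      have : (0:ℝ) ≤ (n:ℝ) := Nat.cast_nonneg n
      push_cast
      linarith
    · positivity



noncomputable def ccoef (H : ℝ) : ℕ → ℝ
  | 0 => 1
  | k+1 => -(ee (2*H) (k+1))

noncomputable def aexp (H : ℝ) : ℕ → ℝ
  | 0 => H
  | k+1 => ((k:ℝ)+1) - H

noncomputable def bexp (H : ℝ) : ℕ → ℝ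
  | 0 => 3*H
  | k+1 => ((k:ℝ)+1) + H

lemma hasSum_pointwise {H : ℝ} (hH0 : 0 < H) (hH1 : H < 1) {v : ℝ} (hv : 0 < v) :
    HasSum (fun k : ℕ => ccoef H k * (Real.exp (-(aexp H k * v)) - Real.exp (-(bexp H k * v))))
      (Ffun H v * (1 - Real.exp (-(2 * H * v)))) := by
  set A : ℝ := 2*H with hA
  have hA0 : 0 < A := by rw [hA]; linarith
  have hA2 : A < 2 := by rw [hA]; linarith
  set u : ℝ := Real.exp (-v) with hu
  have hu0 : 0 < u := Real.exp_pos _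
  have hu1 : u < 1 := by rw [hu, Real.exp_lt_one_iff]; linarith
  have h1 : HasSum (fun k : ℕ => ee A k * u ^ k) ((1-u) ^ A) := hasSum_ee hA0 hA2 hu0.le hu1
  set p : ℝ := Real.exp (H*v) with hp
  set w : ℝ := Real.exp (-(H*v)) with hw
  set T : ℝ := (1-u) ^ A with hT
  -- rewrite of the rpow term
  have hs : 2 * Real.sinh (v/2) = Real.exp (v/2) * (1 - u) := by
    have e0 : Real.exp (v/2) * Real.exp (-v) = Real.exp (-(v/2)) := by
      rw [← Real.exp_add]; ring_nf
    rw [Real.sinh_eq]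
    rw [hu]
    linear_combination e0
  have hTT : |2 * Real.sinh (v / 2)| ^ (2 * H) = p * T := by
    have hpos : (0:ℝ) < Real.exp (v/2) * (1 - u) := by
      have : (0:ℝ) < 1 - u := by linarith
      positivity
    rw [hs, abs_of_pos hpos, Real.mul_rpow (Real.exp_pos _).le (by linarith : (0:ℝ) ≤ 1 - u),
      ← Real.exp_mul, hT, hp, hA]
    congr 2
    ring
  -- exponential relations
  have e6 : p * w = 1 := by rw [hp, hw, ← Real.exp_add]; ring_nf; exact Real.exp_zero
  have e4 : Real.exp (-(2*H*v)) = w^2 := by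
    rw [hw, ← Real.exp_nat_mul]; congr 1; push_cast; ring
  have e5 : Real.exp (-(3*H*v)) = w^3 := by
    rw [hw, ← Real.exp_nat_mul]; congr 1; push_cast; ring
  have hFf : Ffun H v * (1 - Real.exp (-(2*H*v))) = (p - w^3) - (p - w) * T := by
    rw [Ffun, Real.cosh_eq, hTT, e4, ← hp, ← hw]
    linear_combination (-(w * (1 - T))) * e6
  -- series manipulation
  have h2 : HasSum (fun k : ℕ => (p - w) * (ee A k * u ^ k)) ((p - w) * T) := h1.mul_left _
  have h3 : HasSum (fun k : ℕ => (p - w) * (ee A (k+1) * u ^ (k+1)))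
      ((p - w) * T - (p - w) * (ee A 0 * u ^ 0)) := by
    refine (hasSum_nat_add_iff (f := fun k : ℕ => (p - w) * (ee A k * u ^ k)) 1).mpr ?_
    simpa using h2
  have h4 := h3.neg
  have h5 : HasSum (fun k : ℕ => ccoef H (k+1) *
      (Real.exp (-(aexp H (k+1) * v)) - Real.exp (-(bexp H (k+1) * v))))
      (-((p - w) * T - (p - w) * (ee A 0 * u ^ 0))) := by
    refine h4.congr_fun ?_
    intro k
    have hu_pow : u ^ (k+1) = Real.exp (-(((k:ℝ)+1) * v)) := by
      rw [hu, ← Real.exp_nat_mul]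
      congr 1
      push_cast
      ring
    have ha : Real.exp (-(aexp H (k+1) * v)) = p * u ^ (k+1) := by
      rw [hu_pow, hp, ← Real.exp_add]
      show Real.exp (-(((((k:ℝ)+1) - H)) * v)) = _
      congr 1
      ring
    have hb : Real.exp (-(bexp H (k+1) * v)) = w * u ^ (k+1) := by
      rw [hu_pow, hw, ← Real.exp_add]
      show Real.exp (-(((((k:ℝ)+1) + H)) * v)) = _
      congr 1
      ring
    rw [ha, hb]
    show -(ee (2*H) (k+1)) * (p * u ^ (k+1) - w * u ^ (k+1)) = _
    rw [← hA]
    ring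
  have h6 := (hasSum_nat_add_iff (f := fun k : ℕ => ccoef H k *
      (Real.exp (-(aexp H k * v)) - Real.exp (-(bexp H k * v)))) 1).mp h5
  rw [hFf]
  refine (congrArg (HasSum _) (Eq.symm ?_)).mp h6
  rw [Finset.sum_range_one]
  show (p - w^3) - (p - w) * T
      = -((p - w) * T - (p - w) * (ee A 0 * u ^ 0)) + 1 * (Real.exp (-(H * v)) - Real.exp (-(3*H * v)))
  rw [ee_zero, ← hw, e5]
  ring

section Main

variable {H x : ℝ}

lemma aexp_pos (hH0 : 0 < H) (hH1 : H < 1) : ∀ k : ℕ, 0 < aexp H k := by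
  intro k
  cases k with
  | zero => exact hH0
  | succ m =>
    show (0:ℝ) < ((m:ℝ)+1) - H
    have : (0:ℝ) ≤ (m:ℝ) := Nat.cast_nonneg m
    linarith

lemma bexp_pos (hH0 : 0 < H) : ∀ k : ℕ, 0 < bexp H k := by
  intro k
  cases k with
  | zero => show (0:ℝ) < 3*H; linarith
  | succ m =>
    show (0:ℝ) < ((m:ℝ)+1) + H
    have : (0:ℝ) ≤ (m:ℝ) := Nat.cast_nonneg m
    linarith

lemma aexp_lt_bexp (hH0 : 0 < H) : ∀ k : ℕ, aexp H k < bexp H k := by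
  intro k
  cases k with
  | zero => show H < 3*H; linarith
  | succ m => show ((m:ℝ)+1) - H < ((m:ℝ)+1) + H; linarith

noncomputable def Gfun (H x : ℝ) (k : ℕ) (v : ℝ) : ℝ :=
  ccoef H k * (Real.exp (-(aexp H k * v)) - Real.exp (-(bexp H k * v))) * Real.sin (x*v)

noncomputable def Jfun (H x : ℝ) (k : ℕ) : ℝ :=
  ccoef H k * (x/((aexp H k)^2+x^2) - x/((bexp H k)^2+x^2))

lemma integrableOn_exp_neg_mul {a : ℝ} (ha : 0 < a) :
    IntegrableOn (fun v => Real.exp (-(a*v))) (Set.Ioi (0:ℝ)) :=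
  (exp_neg_integrableOn_Ioi 0 ha).congr_fun (fun v _ => by ring_nf) measurableSet_Ioi

lemma Gfun_integrableOn (hH0 : 0 < H) (hH1 : H < 1) (x : ℝ) (k : ℕ) :
    IntegrableOn (Gfun H x k) (Set.Ioi (0:ℝ)) := by
  have h1 := (integrable_exp_sin (aexp_pos hH0 hH1 k) x).const_mul (ccoef H k)
  have h2 := (integrable_exp_sin (bexp_pos hH0 k) x).const_mul (ccoef H k)
  have h3 : IntegrableOn (fun v => ccoef H k * (Real.exp (-(aexp H k * v)) * Real.sin (x*v))
      - ccoef H k * (Real.exp (-(bexp H k * v)) * Real.sin (x*v))) (Set.Ioi (0:ℝ)) := h1.sub h2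
  exact h3.congr_fun (fun v _ => by rw [Gfun]; ring) measurableSet_Ioi

lemma Gfun_integral (hH0 : 0 < H) (hH1 : H < 1) (x : ℝ) (k : ℕ) :
    ∫ v in Set.Ioi (0:ℝ), Gfun H x k v = Jfun H x k := by
  have h1 := (integrable_exp_sin (aexp_pos hH0 hH1 k) x).const_mul (ccoef H k)
  have h2 := (integrable_exp_sin (bexp_pos hH0 k) x).const_mul (ccoef H k)
  have heq : ∀ v ∈ Set.Ioi (0:ℝ), Gfun H x k v =
      ccoef H k * (Real.exp (-(aexp H k * v)) * Real.sin (x*v))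
        - ccoef H k * (Real.exp (-(bexp H k * v)) * Real.sin (x*v)) := by
    intro v _
    rw [Gfun]; ring
  rw [setIntegral_congr_fun measurableSet_Ioi heq, integral_sub h1 h2,
    integral_const_mul, integral_const_mul,
    integral_exp_sin (aexp_pos hH0 hH1 k) x, integral_exp_sin (bexp_pos hH0 k) x, Jfun]
  ring

lemma Gfun_norm_le (hH0 : 0 < H) (hH1 : H < 1) (x : ℝ) (k : ℕ) :
    ∫ v in Set.Ioi (0:ℝ), ‖Gfun H x k v‖
      ≤ |ccoef H k| * (1/aexp H k + 1/bexp H k) := by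
  have ha := aexp_pos hH0 hH1 k
  have hb := bexp_pos hH0 k
  have h1 : IntegrableOn (fun v => |ccoef H k| *
      (Real.exp (-(aexp H k * v)) + Real.exp (-(bexp H k * v)))) (Set.Ioi (0:ℝ)) := by
    exact (((integrableOn_exp_neg_mul ha).add (integrableOn_exp_neg_mul hb)).const_mul _)
  have hmono : ∀ v ∈ Set.Ioi (0:ℝ), ‖Gfun H x k v‖ ≤ |ccoef H k| *
      (Real.exp (-(aexp H k * v)) + Real.exp (-(bexp H k * v))) := by
    intro v _
    rw [Gfun, Real.norm_eq_abs, abs_mul, abs_mul]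
    have hsle : |Real.sin (x*v)| ≤ 1 := Real.abs_sin_le_one _
    have habdiff : |Real.exp (-(aexp H k * v)) - Real.exp (-(bexp H k * v))|
        ≤ Real.exp (-(aexp H k * v)) + Real.exp (-(bexp H k * v)) := by
      rw [abs_sub_comm]
      refine (abs_sub _ _).trans ?_
      rw [abs_exp, abs_exp]
      linarith
    calc |ccoef H k| * |Real.exp (-(aexp H k * v)) - Real.exp (-(bexp H k * v))| * |Real.sin (x*v)|
        ≤ |ccoef H k| * (Real.exp (-(aexp H k * v)) + Real.exp (-(bexp H k * v))) * 1 := by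
          gcongr
      _ = _ := by ring
  calc ∫ v in Set.Ioi (0:ℝ), ‖Gfun H x k v‖
      ≤ ∫ v in Set.Ioi (0:ℝ), |ccoef H k| *
          (Real.exp (-(aexp H k * v)) + Real.exp (-(bexp H k * v))) := by
        refine setIntegral_mono_on ((Gfun_integrableOn hH0 hH1 x k).norm) h1 measurableSet_Ioi ?_
        intro v hv
        exact hmono v hv
    _ = |ccoef H k| * (1/aexp H k + 1/bexp H k) := by
        rw [integral_const_mul]
        congr 1
        rw [integral_add (integrableOn_exp_neg_mul ha) (integrableOn_exp_neg_mul hb),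
          integral_exp_neg_mul ha, integral_exp_neg_mul hb]

end Main

section Final

variable {H x : ℝ}

lemma summable_W (hH0 : 0 < H) (hH1 : H < 1) :
    Summable (fun k : ℕ => |ccoef H k| * (1/aexp H k + 1/bexp H k)) := by
  have hA0 : 0 < 2*H := by linarith
  have hA2 : 2*H < 2 := by linarith
  refine (summable_nat_add_iff 1).mp ?_
  have hbase : Summable (fun k : ℕ => (4*H/(1-H)) * (1/((k:ℝ)+1)^2)) := by
    have h0 : Summable (fun n : ℕ => 1/(n:ℝ)^2) :=
      Real.summable_one_div_nat_pow.mpr one_lt_two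
    have h1 : Summable (fun n : ℕ => 1/((n:ℝ)+1)^2) := by
      have := (summable_nat_add_iff 1).mpr h0
      refine this.congr (fun n => ?_)
      push_cast
      ring
    exact h1.mul_left _
  refine Summable.of_nonneg_of_le (fun k => ?_) (fun k => ?_) hbase
  · have := aexp_pos hH0 hH1 (k+1)
    have := bexp_pos hH0 (k+1)
    positivity
  · have hk : (0:ℝ) ≤ (k:ℝ) := Nat.cast_nonneg k
    have ha : aexp H (k+1) = ((k:ℝ)+1) - H := rfl
    have hb : bexp H (k+1) = ((k:ℝ)+1) + H := rfl
    have hcc : |ccoef H (k+1)| = |ee (2*H) (k+1)| := by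
      show |-(ee (2*H) (k+1))| = _
      rw [abs_neg]
    have h2 : |ccoef H (k+1)| ≤ 2*H/((k:ℝ)+1) := by
      rw [hcc]; exact abs_ee_succ_le hA0 hA2 k
    have hden : (0:ℝ) < ((k:ℝ)+1)*(1-H) := by nlinarith
    have ha1 : 1/(((k:ℝ)+1) - H) ≤ 1/(((k:ℝ)+1)*(1-H)) := by
      apply one_div_le_one_div_of_le hden
      nlinarith
    have hb1 : 1/(((k:ℝ)+1) + H) ≤ 1/(((k:ℝ)+1)*(1-H)) := by
      apply one_div_le_one_div_of_le hden
      nlinarith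
    have hsplit : 2/(((k:ℝ)+1)*(1-H)) = 1/(((k:ℝ)+1)*(1-H)) + 1/(((k:ℝ)+1)*(1-H)) := by
      ring
    have hapos : (0:ℝ) < ((k:ℝ)+1) - H := by nlinarith
    have hbpos : (0:ℝ) < ((k:ℝ)+1) + H := by nlinarith
    calc |ccoef H (k+1)| * (1/aexp H (k+1) + 1/bexp H (k+1))
        ≤ (2*H/((k:ℝ)+1)) * (2/(((k:ℝ)+1)*(1-H))) := by
          rw [ha, hb]
          apply mul_le_mul h2 (by rw [hsplit]; exact add_le_add ha1 hb1)
            (by positivity) (by positivity)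
      _ = (4*H/(1-H)) * (1/((k:ℝ)+1)^2) := by
          have h1H : (1:ℝ)-H ≠ 0 := by linarith
          have hk1 : ((k:ℝ)+1) ≠ 0 := by positivity
          field_simp
          ring
  
lemma abs_Jfun_le (hH0 : 0 < H) (hH1 : H < 1) (hx : 0 < x) (k : ℕ) :
    |Jfun H x k| ≤ |ccoef H k| * (1/aexp H k + 1/bexp H k) := by
  have ha := aexp_pos hH0 hH1 k
  have hb := bexp_pos hH0 k
  have h1 : (0:ℝ) ≤ x/((aexp H k)^2+x^2) := by positivity
  have h2 : (0:ℝ) ≤ x/((bexp H k)^2+x^2) := by positivity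
  have h3 : x/((aexp H k)^2+x^2) ≤ 1/aexp H k := by
    rw [div_le_div_iff₀ (by positivity) ha]
    nlinarith [sq_nonneg (aexp H k - x)]
  have h4 : x/((bexp H k)^2+x^2) ≤ 1/bexp H k := by
    rw [div_le_div_iff₀ (by positivity) hb]
    nlinarith [sq_nonneg (bexp H k - x)]
  rw [Jfun, abs_mul]
  apply mul_le_mul_of_nonneg_left ?_ (abs_nonneg _)
  calc |x/((aexp H k)^2+x^2) - x/((bexp H k)^2+x^2)|
      ≤ |x/((aexp H k)^2+x^2)| + |x/((bexp H k)^2+x^2)| := abs_sub _ _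
    _ = x/((aexp H k)^2+x^2) + x/((bexp H k)^2+x^2) := by
        rw [abs_of_nonneg h1, abs_of_nonneg h2]
    _ ≤ 1/aexp H k + 1/bexp H k := add_le_add h3 h4

lemma summable_Jfun (hH0 : 0 < H) (hH1 : H < 1) (hx : 0 < x) :
    Summable (Jfun H x) := by
  rw [← summable_abs_iff]
  exact Summable.of_nonneg_of_le (fun k => abs_nonneg _)
    (fun k => abs_Jfun_le hH0 hH1 hx k) (summable_W hH0 hH1)

lemma beta_pos (hH0 : 0 < H) (hH1 : H < 1) (hx : 0 < x) (k : ℕ) :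
    0 < x/((aexp H k)^2+x^2) - x/((bexp H k)^2+x^2) := by
  have ha := aexp_pos hH0 hH1 k
  have hab := aexp_lt_bexp (H := H) hH0 k
  have h1 : (aexp H k)^2 + x^2 < (bexp H k)^2 + x^2 := by nlinarith
  have := div_lt_div_of_pos_left hx (by positivity : (0:ℝ) < (aexp H k)^2+x^2) h1
  linarith

end Final

set_option maxHeartbeats 1000000
/-- The sine transform `b(x)` of `F_H(v)(1 − e^{−2Hv})` satisfies
`b(x) > 8xH²/((H² + x²)(9H² + x²)) > 0` for `x > 0`. -/
theorem sine_transform_lower_bound (H : ℝ) (hH : H ∈ Set.Ioo (0:ℝ) 1)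
    (b : ℝ → ℝ)
    (hb : ∀ x : ℝ, b x = ∫ v in Set.Ioi (0:ℝ),
      Ffun H v * (1 - Real.exp (-(2 * H * v))) * Real.sin (x * v)) :
    ∀ x : ℝ, 0 < x →
      b x > 8 * x * H ^ 2 / ((H ^ 2 + x ^ 2) * (9 * H ^ 2 + x ^ 2))
      ∧ 0 < b x := by
  obtain ⟨hH0, hH1⟩ := hH
  intro x hx
  have hA0 : 0 < 2*H := by linarith
  have hA2 : 2*H < 2 := by linarith
  have hNs : Summable (fun k : ℕ => ∫ v in Set.Ioi (0:ℝ), ‖Gfun H x k v‖) := by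
    refine Summable.of_nonneg_of_le (fun k => ?_)
      (fun k => Gfun_norm_le hH0 hH1 x k) (summable_W hH0 hH1)
    exact integral_nonneg (fun v => norm_nonneg _)
  have hJsum : Summable (Jfun H x) := summable_Jfun hH0 hH1 hx
  have hJsum1 : Summable (fun k => Jfun H x (k+1)) := (summable_nat_add_iff 1).mpr hJsum
  have hJsum2 : Summable (fun k => Jfun H x (k+2)) := (summable_nat_add_iff 2).mpr hJsum
  have hbx : b x = ∑' k, Jfun H x k := by
    rw [hb x]
    have h1 : Set.EqOn (fun v => Ffun H v * (1 - Real.exp (-(2*H*v))) * Real.sin (x*v))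
        (fun v => ∑' k, Gfun H x k v) (Set.Ioi (0:ℝ)) := by
      intro v hv
      exact (((hasSum_pointwise hH0 hH1 hv).mul_right (Real.sin (x*v))).tsum_eq).symm
    rw [setIntegral_congr_fun measurableSet_Ioi h1,
      ← integral_tsum_of_summable_integral_norm (fun k => Gfun_integrableOn hH0 hH1 x k) hNs]
    exact tsum_congr (fun k => Gfun_integral hH0 hH1 x k)
  have hJ0 : Jfun H x 0 = 8 * x * H ^ 2 / ((H ^ 2 + x ^ 2) * (9 * H ^ 2 + x ^ 2)) := by
    have hd1 : (0:ℝ) < H^2 + x^2 := by positivity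
    have hd2 : (0:ℝ) < 9*H^2 + x^2 := by positivity
    show (1:ℝ) * (x/(H^2+x^2) - x/((3*H)^2+x^2)) = _
    field_simp
    ring
  have hee1 : ee (2*H) 1 = -(2*H) := by rw [ee_succ, ee_zero]; norm_num
  have hJ1 : Jfun H x 1 = (2*H) * (x/((1-H)^2+x^2) - x/((1+H)^2+x^2)) := by
    show ccoef H 1 * (x/((aexp H 1)^2+x^2) - x/((bexp H 1)^2+x^2)) = _
    have hc : ccoef H 1 = 2*H := by show -(ee (2*H) 1) = 2*H; rw [hee1]; ring
    have ha : aexp H 1 = 1 - H := by show ((0:ℕ):ℝ)+1-H = 1-H; norm_num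
    have hb' : bexp H 1 = 1 + H := by show ((0:ℕ):ℝ)+1+H = 1+H; norm_num
    rw [hc, ha, hb']
  have hbeta1 : 0 < x/((1-H)^2+x^2) - x/((1+H)^2+x^2) := by
    have h1 : (1-H)^2+x^2 < (1+H)^2+x^2 := by nlinarith
    have := div_lt_div_of_pos_left hx (by positivity : (0:ℝ) < (1-H)^2+x^2) h1
    linarith
  have hJ1pos : 0 < Jfun H x 1 := by
    rw [hJ1]
    exact mul_pos hA0 hbeta1
  have htail : 0 < ∑' k, Jfun H x (k+1) := by
    rcases le_or_gt (2*H) 1 with hA1 | hA1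
    · -- H ≤ 1/2 : all terms nonnegative
      have hnn : ∀ k : ℕ, 0 ≤ Jfun H x (k+1) := by
        intro k
        have hcc : 0 ≤ ccoef H (k+1) := by
          show 0 ≤ -(ee (2*H) (k+1))
          have := ee_succ_nonpos hA0 hA1 k
          linarith
        exact mul_nonneg hcc (beta_pos hH0 hH1 hx (k+1)).le
      calc (0:ℝ) < Jfun H x 1 := hJ1pos
        _ ≤ ∑' k, Jfun H x (k+1) := Summable.le_tsum hJsum1 0 (fun j _ => hnn j)
    · -- 1/2 < H
      set P1 : ℝ := ((1-H)^2+x^2)*((1+H)^2+x^2) with hP1def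
      set P2 : ℝ := ((2-H)^2+x^2)*((2+H)^2+x^2) with hP2def
      have hP1 : 0 < P1 := by positivity
      have hP2 : 0 < P2 := by positivity
      have hP12 : P1 < P2 := by
        have h1 : (1-H)^2+x^2 < (2-H)^2+x^2 := by nlinarith
        have h2 : (1+H)^2+x^2 < (2+H)^2+x^2 := by nlinarith
        exact mul_lt_mul'' h1 h2 (by positivity) (by positivity)
      have hbeta1P : x/((1-H)^2+x^2) - x/((1+H)^2+x^2) = 4*H*x/P1 := by
        rw [hP1def]
        have d1 : (0:ℝ) < (1-H)^2+x^2 := by positivity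
        have d2 : (0:ℝ) < (1+H)^2+x^2 := by positivity
        field_simp
        ring
      have heen : ∀ k : ℕ, 0 ≤ ee (2*H) (k+2) := ee_two_nonneg hA1.le hA2
      have hMterm : ∀ k : ℕ, 0 ≤ ((k:ℝ)+2) * ee (2*H) (k+2) := by
        intro k
        have hk : (0:ℝ) ≤ (k:ℝ) := Nat.cast_nonneg k
        exact mul_nonneg (by linarith) (heen k)
      have hMsum : Summable (fun k : ℕ => ((k:ℝ)+2) * ee (2*H) (k+2)) :=
        summable_of_sum_range_le hMterm (sum_ee_le hA0 hA2)
      have hMle : ∑' k : ℕ, ((k:ℝ)+2) * ee (2*H) (k+2) ≤ 2*H :=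
        Real.tsum_le_of_sum_range_le hMterm (sum_ee_le hA0 hA2)
      have habsJ : ∀ k : ℕ, |Jfun H x (k+2)|
          ≤ (((k:ℝ)+2) * ee (2*H) (k+2)) * (4*H*x/P2) := by
        intro k
        have hk : (0:ℝ) ≤ (k:ℝ) := Nat.cast_nonneg k
        have ha2 : aexp H (k+2) = (k:ℝ)+2-H := by
          show ((k+1:ℕ):ℝ)+1-H = _
          push_cast
          ring
        have hb2 : bexp H (k+2) = (k:ℝ)+2+H := by
          show ((k+1:ℕ):ℝ)+1+H = _
          push_cast
          ring
        have da : (0:ℝ) < ((k:ℝ)+2-H)^2+x^2 := by positivity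
        have db : (0:ℝ) < ((k:ℝ)+2+H)^2+x^2 := by positivity
        have hbetak : x/(((k:ℝ)+2-H)^2+x^2) - x/(((k:ℝ)+2+H)^2+x^2)
            = 4*((k:ℝ)+2)*H*x/((((k:ℝ)+2-H)^2+x^2)*(((k:ℝ)+2+H)^2+x^2)) := by
          field_simp
          ring
        have hP2k : P2 ≤ (((k:ℝ)+2-H)^2+x^2)*(((k:ℝ)+2+H)^2+x^2) := by
          rw [hP2def]
          apply mul_le_mul ?_ ?_ (by positivity) (by positivity)
          · nlinarith
          · nlinarith
        have hble : x/(((k:ℝ)+2-H)^2+x^2) - x/(((k:ℝ)+2+H)^2+x^2)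
            ≤ ((k:ℝ)+2) * (4*H*x/P2) := by
          rw [hbetak]
          calc 4*((k:ℝ)+2)*H*x/((((k:ℝ)+2-H)^2+x^2)*(((k:ℝ)+2+H)^2+x^2))
              ≤ 4*((k:ℝ)+2)*H*x/P2 := by
                gcongr
            _ = ((k:ℝ)+2) * (4*H*x/P2) := by ring
        have hbpos : 0 < x/(((k:ℝ)+2-H)^2+x^2) - x/(((k:ℝ)+2+H)^2+x^2) := by
          have := beta_pos hH0 hH1 hx (k+2)
          rwa [ha2, hb2] at this
        have hJk : Jfun H x (k+2) = -(ee (2*H) (k+2))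
            * (x/(((k:ℝ)+2-H)^2+x^2) - x/(((k:ℝ)+2+H)^2+x^2)) := by
          rw [Jfun, ha2, hb2]
          rfl
        rw [hJk, abs_mul, abs_neg, abs_of_nonneg (heen k), abs_of_nonneg hbpos.le]
        calc ee (2*H) (k+2) * (x/(((k:ℝ)+2-H)^2+x^2) - x/(((k:ℝ)+2+H)^2+x^2))
            ≤ ee (2*H) (k+2) * (((k:ℝ)+2) * (4*H*x/P2)) :=
              mul_le_mul_of_nonneg_left hble (heen k)
          _ = (((k:ℝ)+2) * ee (2*H) (k+2)) * (4*H*x/P2) := by ring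
      have hRle : |∑' k, Jfun H x (k+2)| ≤ (2*H) * (4*H*x/P2) := by
        calc |∑' k, Jfun H x (k+2)| ≤ ∑' k, |Jfun H x (k+2)| := by
              simpa [Real.norm_eq_abs] using norm_tsum_le_tsum_norm (f := fun k => Jfun H x (k+2))
                (by simpa [Real.norm_eq_abs] using hJsum2.abs)
          _ ≤ ∑' k : ℕ, (((k:ℝ)+2) * ee (2*H) (k+2)) * (4*H*x/P2) :=
              Summable.tsum_le_tsum habsJ hJsum2.abs (hMsum.mul_right _)
          _ = (∑' k : ℕ, ((k:ℝ)+2) * ee (2*H) (k+2)) * (4*H*x/P2) := tsum_mul_right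
          _ ≤ (2*H) * (4*H*x/P2) := mul_le_mul_of_nonneg_right hMle (by positivity)
      have htsplit : ∑' k, Jfun H x (k+1) = Jfun H x 1 + ∑' k, Jfun H x (k+2) :=
        Summable.tsum_eq_zero_add hJsum1
      have h4P : 4*H*x/P2 < 4*H*x/P1 := div_lt_div_of_pos_left (by positivity) hP1 hP12
      have hJ1' : Jfun H x 1 = 2*H*(4*H*x/P1) := by rw [hJ1, hbeta1P]
      have hRlow : -(2*H*(4*H*x/P2)) ≤ ∑' k, Jfun H x (k+2) := by
        have := neg_abs_le (∑' k, Jfun H x (k+2))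
        linarith
      rw [htsplit, hJ1']
      have : 2*H*(4*H*x/P2) < 2*H*(4*H*x/P1) := by nlinarith
      linarith
  have hsplit0 : ∑' k, Jfun H x k = Jfun H x 0 + ∑' k, Jfun H x (k+1) :=
    Summable.tsum_eq_zero_add hJsum
  have hLBpos : 0 < 8 * x * H ^ 2 / ((H ^ 2 + x ^ 2) * (9 * H ^ 2 + x ^ 2)) := by positivity
  constructor
  · rw [hbx, hsplit0, hJ0]
    linarith
  · rw [hbx, hsplit0, hJ0]
    linarith
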